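/- For every α ∈ (0,1], the function d_α((x₁,x₂),(y₁,y₂)) = |x₁−y₁| + |x₂−y₂|^α is a metric on ℝ², and the Hausdorff dimension of ℝ² equipped with the metric d_α equals 1 + 1/α. -/

import Mathlib

open Set MeasureTheory Filter Topology
open scoped NNReal ENNReal

/-- The distance `d_α((x₁,x₂),(y₁,y₂)) = |x₁−y₁| + |x₂−y₂|^α` on `ℝ²`. -/
noncomputable def dalpha (α : ℝ) (p q : ℝ × ℝ) : ℝ :=
  |p.1 - q.1| + |p.2 - q.2| ^ α

section Aux

variable {α : ℝ}

lemma rpow_add_le_aux (h0 : 0 < α) (h1 : α ≤ 1) {x y : ℝ} (hx : 0 ≤ x) (hy : 0 ≤ y) :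
    (x + y) ^ α ≤ x ^ α + y ^ α := by
  calc (x + y) ^ α = ((x.toNNReal + y.toNNReal : ℝ≥0) : ℝ) ^ α := by
        rw [NNReal.coe_add, Real.coe_toNNReal _ hx, Real.coe_toNNReal _ hy]
    _ = (((x.toNNReal + y.toNNReal) ^ α : ℝ≥0) : ℝ) := (NNReal.coe_rpow _ _).symm
    _ ≤ ((x.toNNReal ^ α + y.toNNReal ^ α : ℝ≥0) : ℝ) :=
        NNReal.coe_le_coe.2 (NNReal.rpow_add_le_add_rpow _ _ h0.le h1)
    _ = x ^ α + y ^ α := by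
        rw [NNReal.coe_add, NNReal.coe_rpow, NNReal.coe_rpow,
          Real.coe_toNNReal _ hx, Real.coe_toNNReal _ hy]

lemma dalpha_self (h0 : 0 < α) (p : ℝ × ℝ) : dalpha α p p = 0 := by
  simp [dalpha, Real.zero_rpow h0.ne']

lemma dalpha_comm (p q : ℝ × ℝ) : dalpha α p q = dalpha α q p := by
  simp [dalpha, abs_sub_comm]

lemma dalpha_triangle (h0 : 0 < α) (h1 : α ≤ 1) (p q r : ℝ × ℝ) :
    dalpha α p r ≤ dalpha α p q + dalpha α q r := by
  have A : |p.1 - r.1| ≤ |p.1 - q.1| + |q.1 - r.1| := abs_sub_le _ _ _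
  have B : |p.2 - r.2| ^ α ≤ |p.2 - q.2| ^ α + |q.2 - r.2| ^ α := by
    calc |p.2 - r.2| ^ α ≤ (|p.2 - q.2| + |q.2 - r.2|) ^ α :=
          Real.rpow_le_rpow (abs_nonneg _) (abs_sub_le _ _ _) h0.le
      _ ≤ _ := rpow_add_le_aux h0 h1 (abs_nonneg _) (abs_nonneg _)
  simp only [dalpha]
  linarith

lemma dalpha_eq_zero_iff (h0 : 0 < α) (p q : ℝ × ℝ) : dalpha α p q = 0 ↔ p = q := by
  constructor
  · intro h
    have h2 : 0 ≤ |p.2 - q.2| ^ α := Real.rpow_nonneg (abs_nonneg _) _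
    have h1' : |p.1 - q.1| = 0 := by
      have := abs_nonneg (p.1 - q.1); simp only [dalpha] at h; linarith
    have h2' : |p.2 - q.2| ^ α = 0 := by
      have := abs_nonneg (p.1 - q.1); simp only [dalpha] at h; linarith
    have h2'' : |p.2 - q.2| = 0 := by
      by_contra hc
      have hpos : 0 < |p.2 - q.2| := lt_of_le_of_ne (abs_nonneg _) (Ne.symm hc)
      exact absurd h2' (ne_of_gt (Real.rpow_pos_of_pos hpos α))
    have e1 : p.1 = q.1 := by rwa [abs_eq_zero, sub_eq_zero] at h1'
    have e2 : p.2 = q.2 := by rwa [abs_eq_zero, sub_eq_zero] at h2''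
    exact Prod.ext e1 e2
  · rintro rfl; exact dalpha_self h0 p

lemma isOpen_iff_dalpha (h0 : 0 < α) (h1 : α ≤ 1) (s : Set (ℝ × ℝ)) :
    IsOpen s ↔ ∀ x ∈ s, ∃ ε > 0, ∀ y, dalpha α x y < ε → y ∈ s := by
  constructor
  · intro hs x hx
    rcases Metric.isOpen_iff.1 hs x hx with ⟨δ, hδ, hball⟩
    refine ⟨min δ (δ ^ α), lt_min hδ (Real.rpow_pos_of_pos hδ α), fun y hy => ?_⟩
    apply hball
    rw [Metric.mem_ball, Prod.dist_eq, Real.dist_eq, Real.dist_eq]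
    have hy1 : |x.1 - y.1| < δ := by
      have : |x.1 - y.1| ≤ dalpha α x y :=
        le_add_of_nonneg_right (Real.rpow_nonneg (abs_nonneg _) _)
      calc |x.1 - y.1| ≤ dalpha α x y := this
        _ < min δ (δ ^ α) := hy
        _ ≤ δ := min_le_left _ _
    have hy2 : |x.2 - y.2| < δ := by
      by_contra hcon
      push_neg at hcon
      have hge : δ ^ α ≤ |x.2 - y.2| ^ α := Real.rpow_le_rpow hδ.le hcon h0.le
      have hlt : |x.2 - y.2| ^ α < δ ^ α := by
        have : |x.2 - y.2| ^ α ≤ dalpha α x y := le_add_of_nonneg_left (abs_nonneg _)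
        calc |x.2 - y.2| ^ α ≤ dalpha α x y := this
          _ < min δ (δ ^ α) := hy
          _ ≤ δ ^ α := min_le_right _ _
      linarith
    exact max_lt (by rwa [abs_sub_comm]) (by rwa [abs_sub_comm])
  · intro H
    rw [Metric.isOpen_iff]
    intro x hx
    rcases H x hx with ⟨ε, hε, hball⟩
    have hε2 : 0 < ε / 2 := half_pos hε
    refine ⟨min (ε / 2) ((ε / 2) ^ (1 / α)),
      lt_min hε2 (Real.rpow_pos_of_pos hε2 _), fun y hy => ?_⟩
    rw [Metric.mem_ball, Prod.dist_eq] at hy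
    have hy1 : |x.1 - y.1| < ε / 2 := by
      have := (max_lt_iff.1 hy).1
      rw [Real.dist_eq] at this
      rw [abs_sub_comm]
      exact lt_of_lt_of_le this (min_le_left _ _)
    have hy2 : |x.2 - y.2| < (ε / 2) ^ (1 / α) := by
      have := (max_lt_iff.1 hy).2
      rw [Real.dist_eq] at this
      rw [abs_sub_comm]
      exact lt_of_lt_of_le this (min_le_right _ _)
    apply hball
    have h2 : |x.2 - y.2| ^ α < ((ε / 2) ^ (1 / α)) ^ α :=
      Real.rpow_lt_rpow (abs_nonneg _) hy2 h0
    rw [← Real.rpow_mul hε2.le, one_div_mul_cancel h0.ne', Real.rpow_one] at h2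
    have : dalpha α x y = |x.1 - y.1| + |x.2 - y.2| ^ α := rfl
    rw [this]
    linarith

/-- The metric space structure given by `dalpha`, with the standard product topology. -/
noncomputable def dalphaMetric (α : ℝ) (h0 : 0 < α) (h1 : α ≤ 1) : MetricSpace (ℝ × ℝ) :=
  MetricSpace.ofDistTopology (dalpha α) (dalpha_self h0) (fun p q => dalpha_comm p q)
    (dalpha_triangle h0 h1) (isOpen_iff_dalpha h0 h1)
    (fun p q h => (dalpha_eq_zero_iff h0 p q).1 h)

end Aux

section RemoveInstances

attribute [-instance] Prod.metricSpaceMax Prod.emetricSpaceMax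
  Prod.pseudoMetricSpaceMax Prod.pseudoEMetricSpaceMax
  Prod.seminormedAddGroup Prod.seminormedAddCommGroup
  Prod.normedAddGroup Prod.normedAddCommGroup
  Prod.nonUnitalSeminormedRing Prod.seminormedRing
  Prod.nonUnitalNormedRing Prod.normedRing
  Prod.nonUnitalSeminormedCommRing Prod.nonUnitalNormedCommRing
  Prod.seminormedCommRing Prod.normedCommRing

set_option maxHeartbeats 2000000 in
theorem dimH_dalphaMetric (α : ℝ) (h0 : 0 < α) (h1 : α ≤ 1) :
    @dimH (ℝ × ℝ) (@MetricSpace.toEMetricSpace _ (dalphaMetric α h0 h1)) Set.univ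
      = ENNReal.ofReal (1 + 1 / α) := by
  letI inst : MetricSpace (ℝ × ℝ) := dalphaMetric α h0 h1
  haveI : @BorelSpace (ℝ × ℝ) inst.toUniformSpace.toTopologicalSpace _ :=
    ⟨@BorelSpace.measurable_eq (ℝ × ℝ) instTopologicalSpaceProd _ Prod.borelSpace⟩
  show dimH (Set.univ : Set (ℝ × ℝ)) = ENNReal.ofReal (1 + 1 / α)
  set β : ℝ := 1 / α with hβdef
  have hβ0 : 0 < β := by positivity
  have hβ1 : 1 ≤ β := one_le_one_div h0 h1
  have hs0 : (0:ℝ) ≤ 1 + β := by linarith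
  apply le_antisymm
  · -- upper bound
    apply dimH_le
    intro d' hd'
    by_contra hlt
    push_neg at hlt
    have hD : 1 + β < (d' : ℝ) := by
      rw [← ENNReal.ofReal_coe_nnreal (p := d')] at hlt
      exact (ENNReal.ofReal_lt_ofReal_iff_of_nonneg hs0).1 hlt
    set D : ℝ := (d' : ℝ) with hDdef
    have hD0 : (0:ℝ) ≤ D := d'.coe_nonneg
    -- every open 2x2 box has zero measure
    have hbox : ∀ a b : ℝ, μH[D] (Ioo a (a+2) ×ˢ Ioo b (b+2)) = 0 := by
      intro a b
      set t : ∀ n : ℕ, Fin ⌈2*(n:ℝ)⌉₊ × Fin ⌈2*(n:ℝ)^β⌉₊ → Set (ℝ × ℝ) := fun n ij =>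
        Icc (a + ij.1/(n:ℝ)) (a + (ij.1+1)/(n:ℝ)) ×ˢ
          Icc (b + ij.2/(n:ℝ)^β) (b + (ij.2+1)/(n:ℝ)^β) with ht
      have A : Tendsto (fun n : ℕ => ENNReal.ofReal (2/(n:ℝ))) atTop (𝓝 0) := by
        rw [← ENNReal.ofReal_zero]
        exact ENNReal.tendsto_ofReal (tendsto_const_div_atTop_nhds_zero_nat 2)
      have B : ∀ᶠ n in atTop, ∀ i, EMetric.diam (t n i) ≤ ENNReal.ofReal (2/(n:ℝ)) := by
        filter_upwards [eventually_ge_atTop 1] with n hn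
        have npos : (0:ℝ) < n := by exact_mod_cast hn
        have mpos : (0:ℝ) < (n:ℝ)^β := Real.rpow_pos_of_pos npos β
        intro ij
        apply EMetric.diam_le
        intro p hp q hq
        refine le_trans (le_of_eq (edist_dist p q)) (ENNReal.ofReal_le_ofReal ?_)
        obtain ⟨hp1, hp2⟩ := hp
        obtain ⟨hq1, hq2⟩ := hq
        rw [mem_Icc] at hp1 hp2 hq1 hq2
        have key1 : (a + ((ij.1:ℝ)+1)/(n:ℝ)) - (a + (ij.1:ℝ)/(n:ℝ)) = 1/(n:ℝ) := by
          field_simp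
          ring
        have key2 : (b + ((ij.2:ℝ)+1)/(n:ℝ)^β) - (b + (ij.2:ℝ)/(n:ℝ)^β) = 1/(n:ℝ)^β := by
          field_simp
          ring
        have e1 : |p.1 - q.1| ≤ 1/(n:ℝ) := by
          apply abs_sub_le_iff.2
          constructor <;> [skip; skip] <;>
            · rw [← key1]; linarith [hp1.1, hp1.2, hq1.1, hq1.2]
        have e2 : |p.2 - q.2| ^ α ≤ 1/(n:ℝ) := by
          have habs : |p.2 - q.2| ≤ 1/(n:ℝ)^β := by
            apply abs_sub_le_iff.2
            constructor <;> [skip; skip] <;>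
              · rw [← key2]; linarith [hp2.1, hp2.2, hq2.1, hq2.2]
          calc |p.2 - q.2| ^ α ≤ (1/(n:ℝ)^β) ^ α :=
                Real.rpow_le_rpow (abs_nonneg _) habs h0.le
            _ = 1/(n:ℝ) := by
                rw [one_div, ← Real.rpow_neg npos.le, ← Real.rpow_mul npos.le]
                have : -β * α = -1 := by
                  rw [hβdef]; field_simp
                rw [this, Real.rpow_neg_one, one_div]
        show dalpha α p q ≤ 2/(n:ℝ)
        simp only [dalpha]
        have h2n : (1:ℝ)/(n:ℝ) + 1/(n:ℝ) = 2/(n:ℝ) := by ring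
        linarith
      have C : ∀ᶠ n in atTop, Ioo a (a+2) ×ˢ Ioo b (b+2) ⊆ ⋃ i, t n i := by
        filter_upwards [eventually_ge_atTop 1] with n hn
        have npos : (0:ℝ) < n := by exact_mod_cast hn
        have mpos : (0:ℝ) < (n:ℝ)^β := Real.rpow_pos_of_pos npos β
        rintro ⟨x, y⟩ ⟨⟨hx1, hx2⟩, hy1, hy2⟩
        simp only [mem_Ioo] at hx1 hx2 hy1 hy2
        have hxnn : (0:ℝ) ≤ (x - a) * n := by nlinarith
        have hynn : (0:ℝ) ≤ (y - b) * (n:ℝ)^β := by nlinarith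
        have hxi : ⌊(x - a)*(n:ℝ)⌋₊ < ⌈2*(n:ℝ)⌉₊ :=
          Nat.floor_lt_ceil_of_lt_of_pos (by nlinarith) (by nlinarith)
        have hyj : ⌊(y - b)*(n:ℝ)^β⌋₊ < ⌈2*(n:ℝ)^β⌉₊ :=
          Nat.floor_lt_ceil_of_lt_of_pos (by nlinarith) (by nlinarith)
        refine mem_iUnion.2 ⟨(⟨_, hxi⟩, ⟨_, hyj⟩), ?_, ?_⟩
        · rw [mem_Icc]
          constructor
          · have h := Nat.floor_le hxnn
            have : (⌊(x-a)*(n:ℝ)⌋₊:ℝ)/(n:ℝ) ≤ x - a := (div_le_iff₀ npos).2 h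
            simp only []
            linarith
          · have h := (Nat.lt_floor_add_one ((x-a)*(n:ℝ))).le
            have : x - a ≤ ((⌊(x-a)*(n:ℝ)⌋₊:ℝ)+1)/(n:ℝ) := (le_div_iff₀ npos).2 h
            simp only []
            linarith
        · rw [mem_Icc]
          constructor
          · have h := Nat.floor_le hynn
            have : (⌊(y-b)*(n:ℝ)^β⌋₊:ℝ)/(n:ℝ)^β ≤ y - b := (div_le_iff₀ mpos).2 h
            simp only []
            linarith
          · have h := (Nat.lt_floor_add_one ((y-b)*(n:ℝ)^β)).le
            have : y - b ≤ ((⌊(y-b)*(n:ℝ)^β⌋₊:ℝ)+1)/(n:ℝ)^β := (le_div_iff₀ mpos).2 h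
            simp only []
            linarith
      have main := Measure.hausdorffMeasure_le_liminf_sum D (Ioo a (a+2) ×ˢ Ioo b (b+2))
        (fun n : ℕ => ENNReal.ofReal (2/(n:ℝ))) A t B C
      refine le_antisymm ?_ (zero_le)
      refine le_trans main ?_
      have step2 : liminf (fun n : ℕ => ∑ i, EMetric.diam (t n i) ^ D) atTop ≤
          liminf (fun n : ℕ =>
            ENNReal.ofReal ((⌈2*(n:ℝ)⌉₊ * ⌈2*(n:ℝ)^β⌉₊ : ℝ) * (2/(n:ℝ))^D)) atTop := by
        apply liminf_le_liminf
        filter_upwards [B, eventually_ge_atTop 1] with n hBn hn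
        have npos : (0:ℝ) < n := by exact_mod_cast hn
        calc ∑ i, EMetric.diam (t n i) ^ D
            ≤ ∑ _i : Fin ⌈2*(n:ℝ)⌉₊ × Fin ⌈2*(n:ℝ)^β⌉₊, ENNReal.ofReal (2/(n:ℝ)) ^ D :=
              Finset.sum_le_sum fun i _ => ENNReal.rpow_le_rpow (hBn i) hD0
          _ = ((⌈2*(n:ℝ)⌉₊ * ⌈2*(n:ℝ)^β⌉₊ : ℕ) : ℝ≥0∞) * ENNReal.ofReal (2/(n:ℝ)) ^ D := by
              rw [Finset.sum_const, nsmul_eq_mul, Finset.card_univ, Fintype.card_prod,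
                Fintype.card_fin, Fintype.card_fin]
          _ = ENNReal.ofReal ((⌈2*(n:ℝ)⌉₊ * ⌈2*(n:ℝ)^β⌉₊ : ℝ) * (2/(n:ℝ))^D) := by
              rw [ENNReal.ofReal_rpow_of_pos (by positivity),
                ENNReal.ofReal_mul (by positivity)]
              congr 1
              rw [← ENNReal.ofReal_natCast]
              congr 1
              push_cast
              ring
        all_goals isBoundedDefault
      refine le_trans step2 ?_
      have htend : Tendsto (fun n : ℕ =>
          (⌈2*(n:ℝ)⌉₊ * ⌈2*(n:ℝ)^β⌉₊ : ℝ) * (2/(n:ℝ))^D) atTop (𝓝 0) := by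
        apply squeeze_zero' (g := fun n : ℕ => (9 * 2^D) * (n:ℝ)^(1+β-D))
        · filter_upwards with n; positivity
        · filter_upwards [eventually_ge_atTop 1] with n hn
          have hn1 : (1:ℝ) ≤ n := by exact_mod_cast hn
          have npos : (0:ℝ) < n := by linarith
          have hnb1 : (1:ℝ) ≤ (n:ℝ)^β := Real.one_le_rpow hn1 hβ0.le
          have c1 : (⌈2*(n:ℝ)⌉₊ : ℝ) ≤ 3*(n:ℝ) := by
            have := Nat.ceil_lt_add_one (by positivity : (0:ℝ) ≤ 2*(n:ℝ))
            linarith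
          have c2 : (⌈2*(n:ℝ)^β⌉₊ : ℝ) ≤ 3*(n:ℝ)^β := by
            have := Nat.ceil_lt_add_one (by positivity : (0:ℝ) ≤ 2*(n:ℝ)^β)
            linarith
          have cD : (2/(n:ℝ))^D = 2^D * ((n:ℝ)^D)⁻¹ := by
            rw [div_eq_mul_inv, Real.mul_rpow (by norm_num) (by positivity),
              Real.inv_rpow npos.le]
          calc (⌈2*(n:ℝ)⌉₊ * ⌈2*(n:ℝ)^β⌉₊ : ℝ) * (2/(n:ℝ))^D
              ≤ ((3*(n:ℝ)) * (3*(n:ℝ)^β)) * (2^D * ((n:ℝ)^D)⁻¹) := by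
                apply mul_le_mul _ (le_of_eq cD) (by positivity) (by positivity)
                exact mul_le_mul c1 c2 (by positivity) (by positivity)
            _ = (9 * 2^D) * ((n:ℝ)^(1+β) * ((n:ℝ)^D)⁻¹) := by
                rw [Real.rpow_add npos, Real.rpow_one]; ring
            _ = (9 * 2^D) * (n:ℝ)^(1+β-D) := by
                rw [← Real.rpow_neg npos.le, ← Real.rpow_add npos]
                ring_nf
        · have hy : 0 < D - (1+β) := by linarith
          have h1' : Tendsto (fun x : ℝ => x ^ (-(D - (1+β)))) atTop (𝓝 0) :=
            tendsto_rpow_neg_atTop hy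
          have h2' : Tendsto (fun n : ℕ => ((n:ℝ)) ^ (1+β-D)) atTop (𝓝 0) := by
            have hc := h1'.comp (tendsto_natCast_atTop_atTop (R := ℝ))
            have heq : (fun n : ℕ => ((n:ℝ))^(1+β-D)) =
                (fun x : ℝ => x ^ (-(D - (1+β)))) ∘ (fun n : ℕ => (n:ℝ)) := by
              funext n; simp only [Function.comp]; congr 1; ring
            rw [heq]; exact hc
          have := h2'.const_mul (9 * 2^D)
          simpa using this
      have hlim0 : liminf (fun n : ℕ =>
          ENNReal.ofReal ((⌈2*(n:ℝ)⌉₊ * ⌈2*(n:ℝ)^β⌉₊ : ℝ) * (2/(n:ℝ))^D)) atTop = 0 := by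
        apply Filter.Tendsto.liminf_eq
        rw [← ENNReal.ofReal_zero]
        exact ENNReal.tendsto_ofReal htend
      rw [hlim0]
    -- cover the plane by boxes
    have hzero : μH[D] (univ : Set (ℝ × ℝ)) = 0 := by
      have hcover : (univ : Set (ℝ × ℝ)) ⊆ ⋃ z : ℤ × ℤ,
          (Ioo ((z.1:ℝ)-1) ((z.1:ℝ)-1+2) ×ˢ Ioo ((z.2:ℝ)-1) ((z.2:ℝ)-1+2)) := by
        rintro ⟨x, y⟩ -
        refine mem_iUnion.2 ⟨(⌊x⌋, ⌊y⌋), ?_, ?_⟩ <;> rw [mem_Ioo] <;> constructor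
        · have := Int.floor_le x; simp only []; linarith
        · have := Int.lt_floor_add_one x; simp only []; linarith
        · have := Int.floor_le y; simp only []; linarith
        · have := Int.lt_floor_add_one y; simp only []; linarith
      exact measure_mono_null hcover (measure_iUnion_null fun z => hbox _ _)
    rw [hzero] at hd'
    exact (ENNReal.zero_ne_top hd').elim
  · -- lower bound
    have key : ∀ t : Set (ℝ × ℝ), volume t ≤ 4 * EMetric.diam t ^ (1+β) := by
      intro t
      rcases eq_empty_or_nonempty t with rfl | ⟨p, hp⟩
      · simp
      by_cases htop : EMetric.diam t = ∞
      · rw [htop, ENNReal.top_rpow_of_pos (by positivity)]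
        simp
      by_cases h0t : EMetric.diam t = 0
      · have hsing : t.Subsingleton := EMetric.diam_eq_zero_iff.1 h0t
        rw [hsing.measure_zero]
        exact zero_le
      set d : ℝ := (EMetric.diam t).toReal with hd
      have hdpos : 0 < d := ENNReal.toReal_pos h0t htop
      have hsub : t ⊆ Icc (p.1 - d) (p.1 + d) ×ˢ Icc (p.2 - d ^ β) (p.2 + d ^ β) := by
        intro q hq
        have hle : edist q p ≤ EMetric.diam t := EMetric.edist_le_diam_of_mem hq hp
        have h1' : ENNReal.ofReal (dalpha α q p) ≤ EMetric.diam t := by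
          refine le_trans (le_of_eq ?_) hle
          exact (edist_dist q p).symm
        have hreal : dalpha α q p ≤ d := (ENNReal.ofReal_le_iff_le_toReal htop).1 h1'
        have hq1 : |q.1 - p.1| ≤ d := by
          have : |q.1 - p.1| ≤ dalpha α q p :=
            le_add_of_nonneg_right (Real.rpow_nonneg (abs_nonneg _) _)
          linarith
        have hq2' : |q.2 - p.2| ^ α ≤ d := by
          have : |q.2 - p.2| ^ α ≤ dalpha α q p := le_add_of_nonneg_left (abs_nonneg _)
          linarith
        have hq2 : |q.2 - p.2| ≤ d ^ β := by
          have h' : (|q.2 - p.2| ^ α) ^ β ≤ d ^ β :=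
            Real.rpow_le_rpow (Real.rpow_nonneg (abs_nonneg _) _) hq2' hβ0.le
          rwa [← Real.rpow_mul (abs_nonneg _), mul_one_div_cancel h0.ne',
            Real.rpow_one] at h'
        have hb1 := abs_le.1 hq1
        have hb2 := abs_le.1 hq2
        exact ⟨mem_Icc.2 ⟨by linarith [hb1.1], by linarith [hb1.2]⟩,
          mem_Icc.2 ⟨by linarith [hb2.1], by linarith [hb2.2]⟩⟩
      calc volume t ≤ volume (Icc (p.1 - d) (p.1 + d) ×ˢ Icc (p.2 - d ^ β) (p.2 + d ^ β)) :=
            measure_mono hsub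
        _ = ENNReal.ofReal (2*d) * ENNReal.ofReal (2*(d^β)) := by
            rw [Measure.volume_eq_prod, Measure.prod_prod, Real.volume_Icc, Real.volume_Icc]
            congr 1 <;> congr 1 <;> ring
        _ = 4 * EMetric.diam t ^ (1+β) := by
            rw [← ENNReal.ofReal_mul (by positivity)]
            have hmul : (2*d) * (2*(d^β)) = 4 * (d ^ ((1:ℝ)+β)) := by
              rw [Real.rpow_add hdpos, Real.rpow_one]; ring
            rw [hmul, ENNReal.ofReal_mul (by norm_num),
              ← ENNReal.ofReal_rpow_of_pos hdpos, ENNReal.ofReal_toReal htop]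
            norm_num
    have hle : (4 : ℝ≥0∞)⁻¹ • (volume : Measure (ℝ × ℝ)) ≤ μH[1+β] := by
      refine Measure.le_hausdorffMeasure _ _ ∞ (by simp) fun t _ => ?_
      rw [Measure.smul_apply, smul_eq_mul]
      calc (4:ℝ≥0∞)⁻¹ * volume t ≤ 4⁻¹ * (4 * EMetric.diam t ^ (1+β)) := by
            gcongr
            exact key t
        _ = EMetric.diam t ^ (1+β) := by
            rw [← mul_assoc, ENNReal.inv_mul_cancel (by norm_num) (by norm_num), one_mul]
    have hvol : (volume : Measure (ℝ × ℝ)) univ = ∞ := by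
      rw [← univ_prod_univ, Measure.volume_eq_prod, Measure.prod_prod, Real.volume_univ]
      simp
    have hμtop : μH[1+β] (univ : Set (ℝ × ℝ)) = ∞ := by
      have h := Measure.le_iff'.1 hle univ
      rw [Measure.smul_apply, smul_eq_mul, hvol] at h
      rw [ENNReal.mul_top (by norm_num)] at h
      exact top_le_iff.1 h
    have hcoe : ((1+β).toNNReal : ℝ) = 1 + β := Real.coe_toNNReal _ hs0
    have := le_dimH_of_hausdorffMeasure_eq_top (d := (1+β).toNNReal) (by rw [hcoe]; exact hμtop)
    calc ENNReal.ofReal (1 + 1/α) = ((1+β).toNNReal : ℝ≥0∞) := rfl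
      _ ≤ dimH (univ : Set (ℝ × ℝ)) := this

end RemoveInstances

/-- For `α ∈ (0,1]`, `d_α` is a metric on `ℝ²`, and the Hausdorff dimension of `ℝ²`
equipped with `d_α` equals `1 + 1/α`. -/
theorem stmt17 (α : ℝ) (hα : α ∈ Set.Ioc (0 : ℝ) 1) :
    (∀ p q : ℝ × ℝ, dalpha α p q = 0 ↔ p = q) ∧
    (∀ p q : ℝ × ℝ, dalpha α p q = dalpha α q p) ∧
    (∀ p q r : ℝ × ℝ, dalpha α p r ≤ dalpha α p q + dalpha α q r) ∧
    (∀ m : MetricSpace (ℝ × ℝ), (∀ p q : ℝ × ℝ, @dist _ m.toDist p q = dalpha α p q) →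
      @dimH (ℝ × ℝ) (@MetricSpace.toEMetricSpace _ m) Set.univ
        = ENNReal.ofReal (1 + 1 / α)) := by
  obtain ⟨h0, h1⟩ := hα
  refine ⟨dalpha_eq_zero_iff h0, fun p q => dalpha_comm p q, dalpha_triangle h0 h1, ?_⟩
  intro m hm
  have hmeq : m = dalphaMetric α h0 h1 := by
    apply MetricSpace.ext
    exact congrArg Dist.mk (funext fun p => funext fun q => hm p q)
  rw [hmeq]
  exact dimH_dalphaMetric α h0 h1
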